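/- For nonnegative integers n ≤ m, the element X + Y is a strong Lefschetz element for the ring ℝ[X,Y]/(X^{n+1}, Y^{m+1}); that is, for each i with 0 ≤ i ≤ ⌊(n+m)/2⌋, multiplication by (X+Y)^{n+m-2i} is a linear isomorphism from the degree-i component to the degree-(n+m-i) component. -/

import Mathlib

open MvPolynomial

namespace SLPaux

noncomputable section

abbrev R2 : Type := MvPolynomial (Fin 2) ℝ

/-- Dehomogenization map sending `X 0 ↦ X`, `X 1 ↦ 1`. -/
noncomputable def E : R2 →ₐ[ℝ] Polynomial ℝ := MvPolynomial.aeval ![Polynomial.X, 1]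

lemma fin2_eq (d : Fin 2 →₀ ℕ) :
    d = Finsupp.single 0 (d 0) + Finsupp.single 1 (d 1) := by
  ext j
  fin_cases j <;> simp [Finsupp.single_apply]

lemma degree_fin2 (d : Fin 2 →₀ ℕ) : Finsupp.degree d = d 0 + d 1 := by
  rw [show Finsupp.degree d = ∑ i ∈ d.support, d i from rfl, Finset.sum_subset (Finset.subset_univ d.support)]
  · exact Fin.sum_univ_two d
  · intro x _ hx; simpa using Finsupp.notMem_support_iff.mp hx

lemma supp_deg {f : R2} {D : ℕ} (hf : f.IsHomogeneous D) {v : Fin 2 →₀ ℕ}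
    (hv : f.coeff v ≠ 0) : v 0 + v 1 = D := by
  rw [← degree_fin2]
  by_contra h
  exact hv (hf.coeff_eq_zero h)

lemma E_coeff (f : R2) (a : ℕ) :
    (E f).coeff a = ∑ v ∈ f.support, (if v 0 = a then f.coeff v else 0) := by
  conv_lhs => rw [f.as_sum]
  rw [map_sum, Polynomial.finset_sum_coeff]
  refine Finset.sum_congr rfl fun v _ => ?_
  rw [E, MvPolynomial.aeval_monomial]
  have hprod : (v.prod fun i k => (![Polynomial.X, 1] : Fin 2 → Polynomial ℝ) i ^ k)
      = Polynomial.X ^ (v 0) := by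
    rw [Finsupp.prod_fintype]
    · rw [Fin.prod_univ_two]; simp
    · intro i; exact pow_zero _
  rw [hprod, Polynomial.algebraMap_eq, Polynomial.coeff_C_mul, Polynomial.coeff_X_pow]
  by_cases h : v 0 = a
  · simp [h]
  · rw [if_neg h, if_neg (fun hh => h hh.symm), mul_zero]

lemma E_coeff_homog {f : R2} {D : ℕ} (hf : f.IsHomogeneous D) {a b : ℕ} (hab : a + b = D) :
    (E f).coeff a = f.coeff (Finsupp.single 0 a + Finsupp.single 1 b) := by
  rw [E_coeff]
  set u : Fin 2 →₀ ℕ := Finsupp.single 0 a + Finsupp.single 1 b with hu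
  have hu0 : u 0 = a := by simp [hu, Finsupp.single_apply]
  have hu1 : u 1 = b := by simp [hu, Finsupp.single_apply]
  have step : ∀ v ∈ f.support, (if v 0 = a then f.coeff v else 0)
      = if v = u then f.coeff v else 0 := by
    intro v hv
    have hdeg : v 0 + v 1 = D := supp_deg hf (MvPolynomial.mem_support_iff.mp hv)
    by_cases h : v 0 = a
    · have hvu : v = u := by
        rw [fin2_eq v, h, show v 1 = b by omega, hu]
      rw [if_pos h, if_pos hvu]
    · have hvu : v ≠ u := fun hh => h (by rw [hh, hu0])
      rw [if_neg h, if_neg hvu]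
  rw [Finset.sum_congr rfl step, Finset.sum_ite_eq' f.support u (fun v => f.coeff v)]
  split_ifs with h
  · rfl
  · exact (MvPolynomial.notMem_support_iff.mp h).symm

lemma E_natDegree {f : R2} {D : ℕ} (hf : f.IsHomogeneous D) : (E f).natDegree ≤ D := by
  refine Polynomial.natDegree_le_iff_coeff_eq_zero.mpr fun a ha => ?_
  rw [E_coeff]
  refine Finset.sum_eq_zero fun v hv => ?_
  have hdeg : v 0 + v 1 = D := supp_deg hf (MvPolynomial.mem_support_iff.mp hv)
  rw [if_neg]; omega

lemma memI_iff (n m : ℕ) (f : R2) :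
    f ∈ Ideal.span {(MvPolynomial.X 0 : R2) ^ (n+1), (MvPolynomial.X 1 : R2) ^ (m+1)} ↔
      ∀ v : Fin 2 →₀ ℕ, f.coeff v ≠ 0 → n + 1 ≤ v 0 ∨ m + 1 ≤ v 1 := by
  constructor
  · intro hf v hv
    rw [Ideal.mem_span_pair] at hf
    obtain ⟨p, q, hpq⟩ := hf
    by_contra hcon
    push_neg at hcon
    apply hv
    rw [← hpq, MvPolynomial.coeff_add, X_pow_eq_monomial, X_pow_eq_monomial,
        mul_comm p _, mul_comm q _,
        MvPolynomial.coeff_monomial_mul', MvPolynomial.coeff_monomial_mul',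
        if_neg, if_neg, add_zero]
    · rw [Finsupp.single_le_iff]; omega
    · rw [Finsupp.single_le_iff]; omega
  · intro h
    have hx : (MvPolynomial.X 0 : R2) ^ (n+1) ∈
        Ideal.span {(MvPolynomial.X 0 : R2) ^ (n+1), (MvPolynomial.X 1 : R2) ^ (m+1)} :=
      Ideal.subset_span (Set.mem_insert _ _)
    have hy : (MvPolynomial.X 1 : R2) ^ (m+1) ∈
        Ideal.span {(MvPolynomial.X 0 : R2) ^ (n+1), (MvPolynomial.X 1 : R2) ^ (m+1)} :=
      Ideal.subset_span (Set.mem_insert_of_mem _ rfl)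
    rw [f.as_sum]
    apply Ideal.sum_mem
    intro v hv
    rcases h v (MvPolynomial.mem_support_iff.mp hv) with h1 | h1
    · have : (MvPolynomial.monomial v) (MvPolynomial.coeff v f)
          = (MvPolynomial.X 0 : R2) ^ (n+1)
            * (MvPolynomial.monomial (v - Finsupp.single 0 (n+1))) (MvPolynomial.coeff v f) := by
        rw [X_pow_eq_monomial, MvPolynomial.monomial_mul, one_mul,
          add_tsub_cancel_of_le (Finsupp.single_le_iff.mpr h1)]
      rw [this]
      exact Ideal.mul_mem_right _ _ hx
    · have : (MvPolynomial.monomial v) (MvPolynomial.coeff v f)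
          = (MvPolynomial.X 1 : R2) ^ (m+1)
            * (MvPolynomial.monomial (v - Finsupp.single 1 (m+1))) (MvPolynomial.coeff v f) := by
        rw [X_pow_eq_monomial, MvPolynomial.monomial_mul, one_mul,
          add_tsub_cancel_of_le (Finsupp.single_le_iff.mpr h1)]
      rw [this]
      exact Ideal.mul_mem_right _ _ hy

lemma memI_iff_homog {n m D : ℕ} {f : R2} (hf : f.IsHomogeneous D) :
    f ∈ Ideal.span {(MvPolynomial.X 0 : R2) ^ (n+1), (MvPolynomial.X 1 : R2) ^ (m+1)} ↔
      ∀ a : ℕ, a ≤ n → D ≤ m + a → (E f).coeff a = 0 := by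
  rw [memI_iff]
  constructor
  · intro h a han hDm
    rcases le_or_gt a D with haD | haD
    · rw [E_coeff_homog hf (show a + (D - a) = D by omega)]
      by_contra hne
      rcases h _ hne with h1 | h1
      · simp [Finsupp.single_apply] at h1; omega
      · simp [Finsupp.single_apply] at h1; omega
    · exact Polynomial.coeff_eq_zero_of_natDegree_lt (lt_of_le_of_lt (E_natDegree hf) haD)
  · intro h v hv
    have hdeg : v 0 + v 1 = D := supp_deg hf hv
    by_contra hcon
    push_neg at hcon
    apply hv
    have := h (v 0) (by omega) (by omega)
    rw [E_coeff_homog hf (show v 0 + v 1 = D from hdeg), ← fin2_eq v] at this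
    exact this

lemma coprime_pow (k s : ℕ) :
    IsCoprime ((Polynomial.X : Polynomial ℝ) ^ k) ((1 + Polynomial.X) ^ s) := by
  apply IsCoprime.pow
  exact ⟨-1, 1, by ring⟩

/-- Core univariate lemma: a polynomial of degree ≤ r such that `(1+X)^s * F` has
vanishing coefficients in the window `[e, e+r]` (with `e ≤ s`) must be zero. -/
lemma core (r e : ℕ) : ∀ s : ℕ, e ≤ s → ∀ F : Polynomial ℝ, F.natDegree ≤ r →
    (∀ b, e ≤ b → b ≤ e + r → ((1 + Polynomial.X) ^ s * F).coeff b = 0) → F = 0 := by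
  induction e with
  | zero =>
    intro s _ F hdeg h
    have hdvd : (Polynomial.X : Polynomial ℝ) ^ (r+1) ∣ (1 + Polynomial.X) ^ s * F :=
      Polynomial.X_pow_dvd_iff.mpr fun d hd => h d (Nat.zero_le _) (by omega)
    have hF : (Polynomial.X : Polynomial ℝ) ^ (r+1) ∣ F :=
      (coprime_pow (r+1) s).dvd_of_dvd_mul_left hdvd
    by_contra hne
    have := Polynomial.natDegree_le_of_dvd hF hne
    rw [Polynomial.natDegree_X_pow] at this
    omega
  | succ e ih =>
    intro s hes F hdeg h
    obtain ⟨s', rfl⟩ : ∃ s', s = s' + 1 := ⟨s - 1, by omega⟩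
    set F₁ : Polynomial ℝ := Polynomial.C (((s' + 1 : ℕ)) : ℝ) * F
      + (1 + Polynomial.X) * Polynomial.derivative F with hF₁
    have hder : Polynomial.derivative ((1 + Polynomial.X) ^ (s'+1) * F)
        = (1 + Polynomial.X) ^ s' * F₁ := by
      rw [Polynomial.derivative_mul, Polynomial.derivative_pow]
      simp only [Polynomial.derivative_add, Polynomial.derivative_one,
        Polynomial.derivative_X, zero_add, mul_one, Nat.add_sub_cancel, hF₁]
      rw [pow_succ]
      ring
    have hdeg1 : F₁.natDegree ≤ r := by
      apply le_trans (Polynomial.natDegree_add_le _ _)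
      rw [max_le_iff]
      constructor
      · exact le_trans (Polynomial.natDegree_C_mul_le _ _) hdeg
      · rcases eq_or_ne (Polynomial.derivative F) 0 with hd0 | hd0
        · simp [hd0]
        · have hFnd : 1 ≤ F.natDegree := by
            by_contra hh
            push_neg at hh
            exact hd0 (Polynomial.derivative_of_natDegree_zero (by omega))
          have h3 : ((1 + Polynomial.X) * Polynomial.derivative F).natDegree
              ≤ (1 + Polynomial.X : Polynomial ℝ).natDegree
                + (Polynomial.derivative F).natDegree := Polynomial.natDegree_mul_le
          have h1 : (1 + Polynomial.X : Polynomial ℝ).natDegree = 1 := by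
            rw [add_comm, ← Polynomial.C_1, Polynomial.natDegree_X_add_C]
          have h2 : (Polynomial.derivative F).natDegree ≤ F.natDegree - 1 :=
            Polynomial.natDegree_derivative_le F
          omega
    have hwin1 : ∀ b, e ≤ b → b ≤ e + r → ((1 + Polynomial.X) ^ s' * F₁).coeff b = 0 := by
      intro b hb1 hb2
      rw [← hder, Polynomial.coeff_derivative, h (b+1) (by omega) (by omega), zero_mul]
    have hF1 : F₁ = 0 := ih s' (by omega) F₁ hdeg1 hwin1
    by_contra hne
    have hlead : F.coeff F.natDegree ≠ 0 := by
      rw [Polynomial.coeff_natDegree]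
      exact Polynomial.leadingCoeff_ne_zero.mpr hne
    have hc : F₁.coeff F.natDegree = 0 := by rw [hF1, Polynomial.coeff_zero]
    have hmul : (1 + Polynomial.X) * Polynomial.derivative F
        = Polynomial.derivative F + Polynomial.X * Polynomial.derivative F := by ring
    rw [hF₁, hmul, Polynomial.coeff_add, Polynomial.coeff_C_mul, Polynomial.coeff_add] at hc
    cases hδ : F.natDegree with
    | zero =>
      rw [hδ] at hc hlead
      have e1 : F.coeff (0 + 1) = 0 :=
        Polynomial.coeff_eq_zero_of_natDegree_lt (by omega)
      have e2 : (Polynomial.X * Polynomial.derivative F).coeff 0 = 0 := by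
        rw [Polynomial.mul_coeff_zero, Polynomial.coeff_X_zero, zero_mul]
      rw [Polynomial.coeff_derivative, e1, e2, zero_mul, add_zero, add_zero,
        mul_eq_zero] at hc
      have hs : (((s' + 1 : ℕ)) : ℝ) ≠ 0 := Nat.cast_ne_zero.mpr (by omega)
      tauto
    | succ δ' =>
      rw [hδ] at hc hlead
      have e1 : F.coeff (δ' + 1 + 1) = 0 :=
        Polynomial.coeff_eq_zero_of_natDegree_lt (by omega)
      rw [Polynomial.coeff_X_mul, Polynomial.coeff_derivative, Polynomial.coeff_derivative,
        e1, zero_mul, zero_add] at hc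
      have h0 : F.coeff (δ' + 1) * ((((s' + 1 : ℕ)) : ℝ) + ((δ' : ℕ) + 1)) = 0 := by
        push_cast at hc ⊢
        linarith
      rcases mul_eq_zero.mp h0 with h1 | h1
      · exact hlead h1
      · have hpos : (0:ℝ) < (((s' + 1 : ℕ)) : ℝ) + ((δ' : ℕ) + 1) := by positivity
        linarith

/-- Homogenization in degree `i` of a univariate polynomial. -/
noncomputable def hpoly (i : ℕ) (F : Polynomial ℝ) : R2 :=
  ∑ a ∈ Finset.range (i+1),
    MvPolynomial.monomial (Finsupp.single 0 a + Finsupp.single 1 (i - a)) (F.coeff a)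

lemma hpoly_homog (i : ℕ) (F : Polynomial ℝ) : (hpoly i F).IsHomogeneous i := by
  apply MvPolynomial.IsHomogeneous.sum
  intro a ha
  apply MvPolynomial.isHomogeneous_monomial
  rw [degree_fin2]
  simp only [Finsupp.add_apply, Finsupp.single_apply]
  simp only [Finset.mem_range] at ha
  norm_num
  omega

lemma hpoly_coeff {i a : ℕ} (F : Polynomial ℝ) (ha : a ≤ i) :
    (hpoly i F).coeff (Finsupp.single 0 a + Finsupp.single 1 (i - a)) = F.coeff a := by
  rw [hpoly, MvPolynomial.coeff_sum]
  rw [Finset.sum_eq_single_of_mem a (Finset.mem_range.mpr (by omega))]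
  · rw [MvPolynomial.coeff_monomial, if_pos rfl]
  · intro a' _ hne
    rw [MvPolynomial.coeff_monomial, if_neg]
    intro hh
    apply hne
    have := DFunLike.congr_fun hh (0 : Fin 2)
    simpa [Finsupp.single_apply] using this

lemma E_hpoly {i : ℕ} {F : Polynomial ℝ} (hF : F.natDegree ≤ i) : E (hpoly i F) = F := by
  ext a
  rcases le_or_gt a i with h | h
  · rw [E_coeff_homog (hpoly_homog i F) (show a + (i - a) = i by omega), hpoly_coeff F h]
  · rw [Polynomial.coeff_eq_zero_of_natDegree_lt (lt_of_le_of_lt (E_natDegree (hpoly_homog i F)) h),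
      Polynomial.coeff_eq_zero_of_natDegree_lt (lt_of_le_of_lt hF h)]

lemma window_surj (s e r : ℕ) (hes : e ≤ s) (w : Fin (r+1) → ℝ) :
    ∃ F : Polynomial ℝ, F.natDegree ≤ r ∧
      ∀ j : Fin (r+1), ((1 + Polynomial.X) ^ s * F).coeff (e + j) = w j := by
  classical
  let M : Polynomial ℝ →ₗ[ℝ] (Fin (r+1) → ℝ) :=
    LinearMap.pi fun j => (Polynomial.lcoeff ℝ (e + j)).comp
      (LinearMap.mulLeft ℝ ((1 + Polynomial.X) ^ s))
  let T : (Fin (r+1) → ℝ) →ₗ[ℝ] (Fin (r+1) → ℝ) :=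
    (M.comp (Polynomial.degreeLT ℝ (r+1)).subtype).comp
      (Polynomial.degreeLTEquiv ℝ (r+1)).symm.toLinearMap
  have hnd : ∀ c : Fin (r+1) → ℝ,
      (((Polynomial.degreeLTEquiv ℝ (r+1)).symm c : Polynomial.degreeLT ℝ (r+1)) :
        Polynomial ℝ).natDegree ≤ r := by
    intro c
    set P := (((Polynomial.degreeLTEquiv ℝ (r+1)).symm c : Polynomial.degreeLT ℝ (r+1)) :
        Polynomial ℝ) with hP
    have hmem : P ∈ Polynomial.degreeLT ℝ (r+1) :=
      ((Polynomial.degreeLTEquiv ℝ (r+1)).symm c).property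
    rw [Polynomial.mem_degreeLT] at hmem
    rcases eq_or_ne P 0 with h0 | h0
    · rw [h0]; simp
    · have := (Polynomial.natDegree_lt_iff_degree_lt (n := r+1) h0).mpr hmem
      omega
  have hinj : Function.Injective T := by
    rw [← LinearMap.ker_eq_bot, LinearMap.ker_eq_bot']
    intro c hc
    set P := (((Polynomial.degreeLTEquiv ℝ (r+1)).symm c : Polynomial.degreeLT ℝ (r+1)) :
        Polynomial ℝ) with hP
    have hwin : ∀ b, e ≤ b → b ≤ e + r → ((1 + Polynomial.X) ^ s * P).coeff b = 0 := by
      intro b hb1 hb2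
      have hj : b - e < r + 1 := by omega
      have := congrFun hc ⟨b - e, hj⟩
      simp only [T, M, LinearMap.comp_apply, LinearMap.pi_apply, Polynomial.lcoeff_apply,
        LinearMap.mulLeft_apply, Submodule.coe_subtype, Pi.zero_apply] at this
      rwa [show e + (b - e) = b by omega] at this
    have hP0 : P = 0 := core r e s hes P (hnd c) hwin
    have : ((Polynomial.degreeLTEquiv ℝ (r+1)).symm c : Polynomial.degreeLT ℝ (r+1)) = 0 :=
      Subtype.ext hP0
    rwa [LinearEquiv.map_eq_zero_iff] at this
  obtain ⟨c, hc⟩ := (LinearMap.injective_iff_surjective.mp hinj) w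
  refine ⟨(((Polynomial.degreeLTEquiv ℝ (r+1)).symm c : Polynomial.degreeLT ℝ (r+1)) :
      Polynomial ℝ), hnd c, fun j => ?_⟩
  have := congrFun hc j
  simpa only [T, M, LinearMap.comp_apply, LinearMap.pi_apply, Polynomial.lcoeff_apply,
    LinearMap.mulLeft_apply, Submodule.coe_subtype, LinearEquiv.coe_coe] using this

lemma lpow_homog (s i : ℕ) {f : R2} (hf : f.IsHomogeneous i) :
    ((MvPolynomial.X 0 + MvPolynomial.X 1 : R2) ^ s * f).IsHomogeneous (s + i) := by
  have h1 : (MvPolynomial.X 0 + MvPolynomial.X 1 : R2).IsHomogeneous 1 :=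
    (MvPolynomial.isHomogeneous_X _ _).add (MvPolynomial.isHomogeneous_X _ _)
  have := (h1.pow s).mul hf
  simpa using this

lemma E_l : E (MvPolynomial.X 0 + MvPolynomial.X 1 : R2) = 1 + Polynomial.X := by
  rw [map_add]
  simp [E, MvPolynomial.aeval_X]
  ring

lemma inj_poly (n m i : ℕ) (hnm : n ≤ m) (hi : 2*i ≤ n+m) {f : R2} (hf : f.IsHomogeneous i)
    (h : (MvPolynomial.X 0 + MvPolynomial.X 1 : R2)^(n+m-2*i) * f ∈
      Ideal.span {(MvPolynomial.X 0 : R2)^(n+1), (MvPolynomial.X 1 : R2)^(m+1)}) :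
    f ∈ Ideal.span {(MvPolynomial.X 0 : R2)^(n+1), (MvPolynomial.X 1 : R2)^(m+1)} := by
  have hlf := lpow_homog (n+m-2*i) i hf
  rw [memI_iff_homog hlf] at h
  rw [memI_iff_homog hf]
  intro a ha hia
  have hE : E ((MvPolynomial.X 0 + MvPolynomial.X 1 : R2)^(n+m-2*i) * f)
      = (1+Polynomial.X)^(n+m-2*i) * E f := by
    rw [map_mul, map_pow, E_l]
  have hwin : ∀ b, n - i ≤ b → b ≤ n →
      ((1+Polynomial.X)^(n+m-2*i) * E f).coeff b = 0 := by
    intro b hb1 hb2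
    rw [← hE]
    exact h b hb2 (by omega)
  rcases le_or_gt i n with hin | hin
  · have h0 : E f = 0 :=
      core i (n-i) (n+m-2*i) (by omega) (E f) (E_natDegree hf)
        (fun b hb1 hb2 => hwin b hb1 (by omega))
    rw [h0, Polynomial.coeff_zero]
  · have hdvd : (Polynomial.X : Polynomial ℝ)^(n+1) ∣ (1+Polynomial.X)^(n+m-2*i) * E f :=
      Polynomial.X_pow_dvd_iff.mpr (fun d hd => hwin d (by omega) (by omega))
    have hdvd2 := (coprime_pow (n+1) (n+m-2*i)).dvd_of_dvd_mul_left hdvd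
    exact Polynomial.X_pow_dvd_iff.mp hdvd2 a (by omega)

lemma surj_poly (n m i : ℕ) (hnm : n ≤ m) (hi : 2*i ≤ n+m) {g : R2}
    (hg : g.IsHomogeneous (n+m-i)) :
    ∃ f : R2, f.IsHomogeneous i ∧
      (MvPolynomial.X 0 + MvPolynomial.X 1 : R2)^(n+m-2*i) * f - g ∈
        Ideal.span {(MvPolynomial.X 0 : R2)^(n+1), (MvPolynomial.X 1 : R2)^(m+1)} := by
  obtain ⟨F, hFdeg, hFwin⟩ := window_surj (n+m-2*i) (n-i) (min i n) (by omega)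
      (fun j => (E g).coeff ((n-i) + j))
  refine ⟨hpoly i F, hpoly_homog i F, ?_⟩
  have hlf := lpow_homog (n+m-2*i) i (hpoly_homog i F)
  have heq : (n+m-2*i) + i = n+m-i := by omega
  rw [heq] at hlf
  have hsub := hlf.sub hg
  rw [memI_iff_homog hsub]
  intro a ha hma
  have hE : E ((MvPolynomial.X 0 + MvPolynomial.X 1 : R2)^(n+m-2*i) * hpoly i F - g)
      = (1+Polynomial.X)^(n+m-2*i) * F - E g := by
    rw [map_sub, map_mul, map_pow, E_l, E_hpoly (le_trans hFdeg (min_le_left i n))]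
  rw [hE, Polynomial.coeff_sub]
  have hj : a - (n-i) < (min i n) + 1 := by omega
  have hw := hFwin ⟨a - (n-i), hj⟩
  rw [show (n-i) + ((⟨a - (n-i), hj⟩ : Fin (min i n + 1)) : ℕ) = a from by simp; omega] at hw
  rw [hw, sub_self]

end

end SLPaux

open SLPaux in
/-- For n ≤ m, X + Y is a strong Lefschetz element for
ℝ[X,Y]/(X^{n+1}, Y^{m+1}): for each 0 ≤ i ≤ ⌊(n+m)/2⌋, multiplication by
(X+Y)^{n+m-2i} is a linear isomorphism from the degree-i component onto the
degree-(n+m-i) component. -/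
theorem strong_lefschetz_two_variable_monomial_ci (n m : ℕ) (hnm : n ≤ m) :
    ∀ i : ℕ, i ≤ (n + m) / 2 →
      let X : MvPolynomial (Fin 2) ℝ := MvPolynomial.X 0
      let Y : MvPolynomial (Fin 2) ℝ := MvPolynomial.X 1
      let I : Ideal (MvPolynomial (Fin 2) ℝ) := Ideal.span {X ^ (n + 1), Y ^ (m + 1)}
      let q : MvPolynomial (Fin 2) ℝ →ₐ[ℝ] MvPolynomial (Fin 2) ℝ ⧸ I :=
        Ideal.Quotient.mkₐ ℝ I
      let V : ℕ → Submodule ℝ (MvPolynomial (Fin 2) ℝ ⧸ I) := fun j =>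
        (MvPolynomial.homogeneousSubmodule (Fin 2) ℝ j).map q.toLinearMap
      (∀ w ∈ V i, q (X + Y) ^ (n + m - 2 * i) * w = 0 → w = 0) ∧
        Submodule.map (LinearMap.mulLeft ℝ (q (X + Y) ^ (n + m - 2 * i))) (V i) =
          V (n + m - i) := by
  intro i hi X Y I q V
  have hi2 : 2 * i ≤ n + m := by omega
  constructor
  · rintro w hw hzero
    obtain ⟨f, hf, rfl⟩ := Submodule.mem_map.mp hw
    rw [MvPolynomial.mem_homogeneousSubmodule] at hf
    have hq : q ((X + Y) ^ (n + m - 2 * i) * f) = 0 := by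
      rw [map_mul, map_pow]; exact hzero
    have hmem : (X + Y) ^ (n + m - 2 * i) * f ∈ I := by
      rwa [← Ideal.Quotient.eq_zero_iff_mem (I := I)]
    have hfI : f ∈ I := inj_poly n m i hnm hi2 hf hmem
    show q f = 0
    exact Ideal.Quotient.eq_zero_iff_mem.mpr hfI
  · ext w
    simp only [Submodule.mem_map]
    constructor
    · rintro ⟨u, ⟨f, hf, rfl⟩, rfl⟩
      have hf' : MvPolynomial.IsHomogeneous f i := hf
      refine ⟨(X + Y) ^ (n + m - 2 * i) * f, ?_, ?_⟩
      · show MvPolynomial.IsHomogeneous _ _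
        have hh := lpow_homog (n + m - 2 * i) i hf'
        rwa [show (n + m - 2 * i) + i = n + m - i by omega] at hh
      · show q ((X + Y) ^ (n + m - 2 * i) * f) = _
        rw [LinearMap.mulLeft_apply, map_mul, map_pow]
        rfl
    · rintro ⟨g, hg, rfl⟩
      have hg' : MvPolynomial.IsHomogeneous g (n + m - i) := hg
      obtain ⟨f, hf, hsub⟩ := surj_poly n m i hnm hi2 hg' 
      refine ⟨q f, ⟨f, hf, rfl⟩, ?_⟩
      rw [LinearMap.mulLeft_apply]
      show q (X + Y) ^ (n + m - 2 * i) * q f = q g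
      rw [← map_pow, ← map_mul]
      exact Ideal.Quotient.eq.mpr hsub
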